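/- Let d ≠ 0 and ζ ∈ ℝ. For each s ∈ ℝ, setting ā₁(s) = s / √(1 + (s² - ζ)²), ā₂(s) = s(s² - ζ) / √(1 + (s² - ζ)²), and f̄(s) = s √(1 + (s² - ζ)²), the pair (ā₁(s), ā₂(s)) is a constant solution of the stationary Lugiato-Lefever system with forcing f = f̄(s). Conversely, every constant solution (a₁, a₂, f) ∈ ℝ³ of the system with detuning ζ arises in this way for some s ∈ ℝ. -/

import Mathlib

open Real

theorem stmt_8 (d ζ : ℝ) (hd : d ≠ 0) :
    (∀ s : ℝ,
      let a1 := s / Real.sqrt (1 + (s ^ 2 - ζ) ^ 2)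
      let a2 := s * (s ^ 2 - ζ) / Real.sqrt (1 + (s ^ 2 - ζ) ^ 2)
      let f := s * Real.sqrt (1 + (s ^ 2 - ζ) ^ 2)
      a2 + ζ * a1 - (a1 ^ 2 + a2 ^ 2) * a1 = 0 ∧
      a1 - ζ * a2 + (a1 ^ 2 + a2 ^ 2) * a2 - f = 0) ∧
    (∀ a1 a2 f : ℝ,
      a2 + ζ * a1 - (a1 ^ 2 + a2 ^ 2) * a1 = 0 →
      a1 - ζ * a2 + (a1 ^ 2 + a2 ^ 2) * a2 - f = 0 →
      ∃ s : ℝ,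
        a1 = s / Real.sqrt (1 + (s ^ 2 - ζ) ^ 2) ∧
        a2 = s * (s ^ 2 - ζ) / Real.sqrt (1 + (s ^ 2 - ζ) ^ 2) ∧
        f = s * Real.sqrt (1 + (s ^ 2 - ζ) ^ 2)) := by
  constructor
  · intro s
    have hpos : (0:ℝ) < 1 + (s ^ 2 - ζ) ^ 2 := by positivity
    have hr : 0 < Real.sqrt (1 + (s ^ 2 - ζ) ^ 2) := Real.sqrt_pos.mpr hpos
    have hr2 : Real.sqrt (1 + (s ^ 2 - ζ) ^ 2) ^ 2 = 1 + (s ^ 2 - ζ) ^ 2 :=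
      Real.sq_sqrt hpos.le
    have hrne : Real.sqrt (1 + (s ^ 2 - ζ) ^ 2) ≠ 0 := ne_of_gt hr
    have hA : (s / Real.sqrt (1 + (s ^ 2 - ζ) ^ 2)) ^ 2
        + (s * (s ^ 2 - ζ) / Real.sqrt (1 + (s ^ 2 - ζ) ^ 2)) ^ 2 = s ^ 2 := by
      field_simp
      ring_nf
      rw [Real.sq_sqrt (by nlinarith [sq_nonneg (s ^ 2 - ζ)])]
      ring
    refine ⟨?_, ?_⟩
    · show s * (s ^ 2 - ζ) / Real.sqrt (1 + (s ^ 2 - ζ) ^ 2)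
        + ζ * (s / Real.sqrt (1 + (s ^ 2 - ζ) ^ 2))
        - ((s / Real.sqrt (1 + (s ^ 2 - ζ) ^ 2)) ^ 2
          + (s * (s ^ 2 - ζ) / Real.sqrt (1 + (s ^ 2 - ζ) ^ 2)) ^ 2)
          * (s / Real.sqrt (1 + (s ^ 2 - ζ) ^ 2)) = 0
      rw [hA]
      field_simp
      ring
    · show s / Real.sqrt (1 + (s ^ 2 - ζ) ^ 2)
        - ζ * (s * (s ^ 2 - ζ) / Real.sqrt (1 + (s ^ 2 - ζ) ^ 2))
        + ((s / Real.sqrt (1 + (s ^ 2 - ζ) ^ 2)) ^ 2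
          + (s * (s ^ 2 - ζ) / Real.sqrt (1 + (s ^ 2 - ζ) ^ 2)) ^ 2)
          * (s * (s ^ 2 - ζ) / Real.sqrt (1 + (s ^ 2 - ζ) ^ 2))
        - s * Real.sqrt (1 + (s ^ 2 - ζ) ^ 2) = 0
      rw [hA]
      field_simp
      linear_combination (-s) * hr2
  · intro a1 a2 f h1 h2
    set s : ℝ := if 0 ≤ a1 then Real.sqrt (a1 ^ 2 + a2 ^ 2) else -Real.sqrt (a1 ^ 2 + a2 ^ 2)
      with hs
    have hsq : s ^ 2 = a1 ^ 2 + a2 ^ 2 := by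
      have : Real.sqrt (a1 ^ 2 + a2 ^ 2) ^ 2 = a1 ^ 2 + a2 ^ 2 :=
        Real.sq_sqrt (by positivity)
      rw [hs]; split <;> simpa [neg_pow] using this
    have hpos : (0:ℝ) < 1 + (s ^ 2 - ζ) ^ 2 := by positivity
    have hr : 0 < Real.sqrt (1 + (s ^ 2 - ζ) ^ 2) := Real.sqrt_pos.mpr hpos
    have hr2 : Real.sqrt (1 + (s ^ 2 - ζ) ^ 2) ^ 2 = 1 + (s ^ 2 - ζ) ^ 2 :=
      Real.sq_sqrt hpos.le
    have hrne : Real.sqrt (1 + (s ^ 2 - ζ) ^ 2) ≠ 0 := ne_of_gt hr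
    have ha2 : a2 = (s ^ 2 - ζ) * a1 := by linear_combination h1 - a1 * hsq
    have hkey : s ^ 2 = a1 ^ 2 * (1 + (s ^ 2 - ζ) ^ 2) := by
      linear_combination hsq + (a2 + (s ^ 2 - ζ) * a1) * ha2
    have hprod : (s - a1 * Real.sqrt (1 + (s ^ 2 - ζ) ^ 2))
        * (s + a1 * Real.sqrt (1 + (s ^ 2 - ζ) ^ 2)) = 0 := by
      linear_combination hkey - a1 ^ 2 * hr2
    have heq : s = a1 * Real.sqrt (1 + (s ^ 2 - ζ) ^ 2) := by
      rcases mul_eq_zero.mp hprod with h | h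
      · linarith
      · rcases le_or_gt 0 a1 with h' | h'
        · have hs0 : 0 ≤ s := by rw [hs]; simp only [h', if_true]; positivity
          have : 0 ≤ a1 * Real.sqrt (1 + (s ^ 2 - ζ) ^ 2) := mul_nonneg h' hr.le
          linarith
        · have hs0 : s ≤ 0 := by
            rw [hs]; simp only [not_le.mpr h', if_false, neg_nonpos]; positivity
          have : a1 * Real.sqrt (1 + (s ^ 2 - ζ) ^ 2) ≤ 0 :=
            mul_nonpos_of_nonpos_of_nonneg h'.le hr.le
          linarith
    have ha1 : a1 = s / Real.sqrt (1 + (s ^ 2 - ζ) ^ 2) := by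
      rw [eq_div_iff hrne]; linarith
    refine ⟨s, ha1, ?_, ?_⟩
    · rw [ha2, ha1]; ring
    · have hf : f = a1 + (s ^ 2 - ζ) * a2 := by linear_combination -h2 - a2 * hsq
      have : f * Real.sqrt (1 + (s ^ 2 - ζ) ^ 2) = s * (1 + (s ^ 2 - ζ) ^ 2) := by
        rw [hf, ha2, ha1]
        field_simp
      have h2' : f * Real.sqrt (1 + (s ^ 2 - ζ) ^ 2)
          = s * Real.sqrt (1 + (s ^ 2 - ζ) ^ 2) * Real.sqrt (1 + (s ^ 2 - ζ) ^ 2) := by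
        rw [this]; linear_combination (-s) * hr2
      exact mul_right_cancel₀ hrne h2'
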